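/- Let k ≥ 1 and ℓ ≥ 0 be integers, let i ≥ 0 be an integer with ℓ ≤ i·k, and let G = (V,E) be a (k,ℓ)-sparse hypergraph. Let V₁, V₂ ⊆ V satisfy |E(V₁)| = k|V₁| − ℓ and |E(V₂)| = k|V₂| − ℓ, and suppose |V₁ ∩ V₂| ≥ i. Then |E(V₁ ∪ V₂)| = k|V₁ ∪ V₂| − ℓ and |E(V₁ ∩ V₂)| = k|V₁ ∩ V₂| − ℓ; that is, both the union and the intersection of the two blocks induce tight subhypergraphs. -/
import Mathlib


/-- The number of edges of the multiset `E` spanned by the vertex set `W`. -/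
def spanCount {V : Type*} [DecidableEq V] (E : Multiset (Finset V)) (W : Finset V) : ℕ :=
  (E.filter fun e => e ⊆ W).card

/-- A hypergraph with edge multiset `E` is `(k,ℓ)`-sparse if every vertex subset spanning
at least one edge spans at most `k|W| - ℓ` edges. -/
def Sparse {V : Type*} [DecidableEq V] (k l : ℕ) (E : Multiset (Finset V)) : Prop :=
  ∀ W : Finset V, 1 ≤ spanCount E W → spanCount E W + l ≤ k * W.card

/-- Block intersection and union: if `ℓ ≤ i·k` and two blocks of a `(k,ℓ)`-sparse
hypergraph intersect in at least `i` vertices, then their union and intersection again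
induce tight subhypergraphs. -/
theorem stmt_5 {V : Type*} [DecidableEq V] (k l i : ℕ) (hk : 1 ≤ k) (hl : l ≤ i * k)
    (E : Multiset (Finset V)) (hne : ∀ e ∈ E, e.Nonempty) (hsp : Sparse k l E)
    (W₁ W₂ : Finset V)
    (h₁ : spanCount E W₁ + l = k * W₁.card)
    (h₂ : spanCount E W₂ + l = k * W₂.card)
    (hcap : i ≤ (W₁ ∩ W₂).card) :
    spanCount E (W₁ ∪ W₂) + l = k * (W₁ ∪ W₂).card ∧
      spanCount E (W₁ ∩ W₂) + l = k * (W₁ ∩ W₂).card := by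
  -- supermodularity of span counts
  have key : spanCount E W₁ + spanCount E W₂ ≤
      spanCount E (W₁ ∪ W₂) + spanCount E (W₁ ∩ W₂) := by
    unfold spanCount
    rw [← Multiset.card_add, ← Multiset.card_add, Multiset.filter_add_filter]
    refine Multiset.card_le_card (add_le_add ?_ ?_) <;>
      refine Multiset.monotone_filter_right _ ?_ <;> intro e he
    · rcases he with h | h
      · exact h.trans Finset.subset_union_left
      · exact h.trans Finset.subset_union_right
    · exact Finset.subset_inter he.1 he.2
  have hik : l ≤ k * (W₁ ∩ W₂).card := by
    calc l ≤ i * k := hl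
      _ ≤ (W₁ ∩ W₂).card * k := Nat.mul_le_mul_right _ hcap
      _ = k * (W₁ ∩ W₂).card := Nat.mul_comm _ _
  have hle2 : spanCount E (W₁ ∩ W₂) + l ≤ k * (W₁ ∩ W₂).card := by
    rcases Nat.eq_zero_or_pos (spanCount E (W₁ ∩ W₂)) with h | h
    · simpa [h] using hik
    · exact hsp _ h
  have hle1 : spanCount E (W₁ ∪ W₂) + l ≤ k * (W₁ ∪ W₂).card := by
    rcases Nat.eq_zero_or_pos (spanCount E (W₁ ∪ W₂)) with h | h
    · rw [h, Nat.zero_add]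
      exact hik.trans (Nat.mul_le_mul_left _
        (Finset.card_le_card Finset.inter_subset_union))
    · exact hsp _ h
  have hmod : k * (W₁ ∪ W₂).card + k * (W₁ ∩ W₂).card = k * W₁.card + k * W₂.card := by
    rw [← Nat.mul_add, ← Nat.mul_add, Finset.card_union_add_card_inter]
  omega
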